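/- Let M be an MSC over P and Σ, let p, q ∈ P, let π, π' ∈ Π_{p,q}, and let e, f ∈ E_q with e → f and π→* ≼_e π'→* (where π→* denotes π followed by the letter →*). Then π' ≺_f π if and only if either (last_{π'}(f) = ⊥ and last_π(f) ≠ ⊥) or f_{π', →+π}(f) = f, where →+π denotes the word → →* followed by π. -/

import Mathlib

namespace Gossip

/-- Events extended with bottom and top elements. -/
inductive ExtEv (E : Type) : Type where
  | bot : ExtEv E
  | evt (e : E) : ExtEv E
  | top : ExtEv E

/-- A message sequence chart (MSC) over processes `P`, alphabet `A`,
with (finite, nonempty) set of events `E`. -/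
structure MSC (P A E : Type) : Type where
  fintypeE : Fintype E
  nonemptyE : Nonempty E
  loc : E → P
  lab : E → A
  /-- process successor relation `→` -/
  next : E → E → Prop
  /-- message relation `◁` -/
  msg : E → E → Prop
  next_loc : ∀ {e f : E}, next e f → loc e = loc f
  next_irrefl : ∀ e : E, ¬ next e e
  next_right_unique : ∀ {e f f' : E}, next e f → next e f' → f = f'
  next_left_unique : ∀ {e e' f : E}, next e f → next e' f → e = e'
  next_total : ∀ e f : E, loc e = loc f →
      Relation.ReflTransGen next e f ∨ Relation.ReflTransGen next f e
  msg_loc : ∀ {e f : E}, msg e f → loc e ≠ loc f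
  /-- every event belongs to at most one pair of `◁` -/
  msg_unique : ∀ {e f e' f' : E}, msg e f → msg e' f' →
      (e = e' ∨ e = f' ∨ f = e' ∨ f = f') → e = e' ∧ f = f'
  fifo : ∀ {e f e' f' : E}, msg e f → msg e' f' → loc e = loc e' → loc f = loc f' →
      (Relation.ReflTransGen next e e' ↔ Relation.ReflTransGen next f f')
  /-- `≤ = (→ ∪ ◁)*` is a partial order -/
  causal_antisymm : ∀ {e f : E},
      Relation.ReflTransGen (fun x y => next x y ∨ msg x y) e f →
      Relation.ReflTransGen (fun x y => next x y ∨ msg x y) f e → e = f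

namespace MSC

variable {P A E B : Type}

/-- the causal order `≤ = (→ ∪ ◁)*` -/
def le (M : MSC P A E) : E → E → Prop :=
  Relation.ReflTransGen (fun x y => M.next x y ∨ M.msg x y)

/-- the strict causal order `<` -/
def lt (M : MSC P A E) (e f : E) : Prop := M.le e f ∧ e ≠ f

/-- `→*` -/
def nextStar (M : MSC P A E) : E → E → Prop := Relation.ReflTransGen M.next

/-- the causal order extended to `E ∪ {⊥,⊤}` with `⊥ < e < ⊤` -/
def extLe (M : MSC P A E) : ExtEv E → ExtEv E → Prop
  | .bot, _ => True
  | _, .top => True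
  | .evt e, .evt f => M.le e f
  | _, _ => False

def extLt (M : MSC P A E) (x y : ExtEv E) : Prop := M.extLe x y ∧ x ≠ y

/-- replace the labelling of an MSC (e.g. to pair it with an extra labelling) -/
def relabel (M : MSC P A E) (μ : E → B) : MSC P B E where
  fintypeE := M.fintypeE
  nonemptyE := M.nonemptyE
  loc := M.loc
  lab := μ
  next := M.next
  msg := M.msg
  next_loc := M.next_loc
  next_irrefl := M.next_irrefl
  next_right_unique := M.next_right_unique
  next_left_unique := M.next_left_unique
  next_total := M.next_total
  msg_loc := M.msg_loc
  msg_unique := M.msg_unique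
  fifo := M.fifo
  causal_antisymm := M.causal_antisymm

end MSC

/-- letters of path expressions: `→`, `→*`, `p▷q`, `⟨a⟩` -/
inductive PathLetter (P A : Type) : Type where
  | next : PathLetter P A
  | nextStar : PathLetter P A
  | msg (p q : P) : PathLetter P A
  | lab (a : A) : PathLetter P A

/-- path expressions: finite words over `Γ` -/
abbrev PathExpr (P A : Type) := List (PathLetter P A)

variable {P A E : Type}

def letterSem (M : MSC P A E) : PathLetter P A → E → E → Prop
  | .next => M.next
  | .nextStar => M.nextStar
  | .msg p q => fun e f => M.loc e = p ∧ M.loc f = q ∧ M.msg e f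
  | .lab a => fun e f => e = f ∧ M.lab e = a

/-- `⟦π⟧` -/
def pathSem (M : MSC P A E) : PathExpr P A → E → E → Prop
  | [] => fun e f => e = f
  | l :: π => fun e g => ∃ f, letterSem M l e f ∧ pathSem M π f g

def letterComp : PathLetter P A → P → P → Prop
  | .msg p q => fun x y => x = p ∧ y = q
  | _ => fun x y => x = y

/-- `Comp(π)`; `π ∈ Π_{p,q}` iff `pcomp π p q` -/
def pcomp : PathExpr P A → P → P → Prop
  | [] => fun x y => x = y
  | l :: π => fun x z => ∃ y, letterComp l x y ∧ pcomp π y z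

/-- `IsLast M π e x` holds iff `x = last_π(e)` (with `x = ⊥` iff no `π`-path into `e`). -/
def IsLast (M : MSC P A E) (π : PathExpr P A) (e : E) : ExtEv E → Prop
  | .bot => ∀ f, ¬ pathSem M π f e
  | .evt g => pathSem M π g e ∧ ∀ f, pathSem M π f e → M.le f g
  | .top => False

/-- `IsFirst M π e x` holds iff `x = first_π(e)` (with `x = ⊤` iff no `π`-path out of `e`). -/
def IsFirst (M : MSC P A E) (π : PathExpr P A) (e : E) : ExtEv E → Prop
  | .top => ∀ f, ¬ pathSem M π e f
  | .evt g => pathSem M π e g ∧ ∀ f, pathSem M π e f → M.le g f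
  | .bot => False

/-- `IsFa M π π' e x` holds iff `x = f_{π,π'}(e) = first_{π'}(last_π(e))`, with
`first_{π'}(⊥) := ⊥`. -/
def IsFa (M : MSC P A E) (π π' : PathExpr P A) (e : E) (x : ExtEv E) : Prop :=
  (IsLast M π e ExtEv.bot ∧ x = ExtEv.bot) ∨
    ∃ g, IsLast M π e (ExtEv.evt g) ∧ IsFirst M π' g x

/-- `IsLastProc M p e x` holds iff `x = last_p(e)`, the maximal event of process `p`
strictly below `e` (`⊥` if none). -/
def IsLastProc (M : MSC P A E) (p : P) (e : E) : ExtEv E → Prop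
  | .bot => ∀ f, M.loc f = p → ¬ M.lt f e
  | .evt g => M.loc g = p ∧ M.lt g e ∧ ∀ f, M.loc f = p → M.lt f e → M.le f g
  | .top => False

/-- `π ≼_e π'`, i.e. `last_π(e) ≤ last_{π'}(e)` -/
def ple (M : MSC P A E) (π π' : PathExpr P A) (e : E) : Prop :=
  ∃ x y, IsLast M π e x ∧ IsLast M π' e y ∧ M.extLe x y

def gossipSuffix : P → List P → PathExpr P A
  | _, [] => []
  | p, q :: w => PathLetter.msg p q :: PathLetter.nextStar :: gossipSuffix q w

/-- `π_w` for `w = p :: rest` -/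
def gossipExpr (p : P) (w : List P) : PathExpr P A :=
  match w with
  | [] => [PathLetter.next, PathLetter.nextStar]
  | _ :: _ => PathLetter.nextStar :: gossipSuffix p w

/-- `π ∈ Π^gossip` -/
def IsGossip (π : PathExpr P A) : Prop :=
  ∃ (p : P) (w : List P), (p :: w).Nodup ∧ π = gossipExpr p w

/-- actions of a CFM transition -/
inductive CAct (P A Msg : Type) : Type where
  | internal (a : A) : CAct P A Msg
  | send (a : A) (m : Msg) (q : P) : CAct P A Msg
  | recv (a : A) (m : Msg) (q : P) : CAct P A Msg

def CAct.labelOf {P A Msg : Type} : CAct P A Msg → A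
  | .internal a => a
  | .send a _ _ => a
  | .recv a _ _ => a

/-- a communicating finite-state machine over `P` and `A` -/
structure CFM (P A : Type) : Type 1 where
  Msg : Type
  msgFin : Fintype Msg
  S : Type
  sFin : Fintype S
  ι : P → S
  Δ : P → Set (S × CAct P A Msg × S)
  Acc : Set (P → S)
  wf_send : ∀ p s a m q s', (s, CAct.send a m q, s') ∈ Δ p → q ≠ p
  wf_recv : ∀ p s a m q s', (s, CAct.recv a m q, s') ∈ Δ p → q ≠ p

namespace CFM

variable {P A E : Type}

/-- `ρ` is a run of the CFM `C` on the MSC `M` -/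
def IsRun (C : CFM P A) (M : MSC P A E) (ρ : E → C.S × CAct P A C.Msg × C.S) : Prop :=
  (∀ e, ρ e ∈ C.Δ (M.loc e)) ∧
  (∀ e, ((ρ e).2.1).labelOf = M.lab e) ∧
  (∀ e, (¬ ∃ f, M.next f e) → (ρ e).1 = C.ι (M.loc e)) ∧
  (∀ e f, M.next e f → (ρ e).2.2 = (ρ f).1) ∧
  (∀ e, (¬ ∃ f, M.msg e f) → (¬ ∃ f, M.msg f e) → ∃ a, (ρ e).2.1 = CAct.internal a) ∧
  (∀ e f, M.msg e f → ∃ m, (ρ e).2.1 = CAct.send (M.lab e) m (M.loc f) ∧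
      (ρ f).2.1 = CAct.recv (M.lab f) m (M.loc e))

/-- the run `ρ` is accepting -/
def IsAccepting (C : CFM P A) (M : MSC P A E)
    (ρ : E → C.S × CAct P A C.Msg × C.S) : Prop :=
  ∃ s : P → C.S, s ∈ C.Acc ∧ ∀ p,
    ((∃ e, M.loc e = p) → ∃ e, M.loc e = p ∧ (¬ ∃ f, M.next e f) ∧ s p = (ρ e).2.2) ∧
    ((¬ ∃ e, M.loc e = p) → s p = C.ι p)

/-- `M ∈ L(C)` -/
def Accepts (C : CFM P A) (M : MSC P A E) : Prop :=
  ∃ ρ, C.IsRun M ρ ∧ C.IsAccepting M ρ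

/-- deterministic CFMs -/
def Deterministic (C : CFM P A) : Prop :=
  ∀ p s γ₁ s₁ γ₂ s₂, (s, γ₁, s₁) ∈ C.Δ p → (s, γ₂, s₂) ∈ C.Δ p →
    CAct.labelOf γ₁ = CAct.labelOf γ₂ →
    ((∀ a₁ a₂, γ₁ = CAct.internal a₁ → γ₂ = CAct.internal a₂ → s₁ = s₂) ∧
     (∀ a₁ m₁ a₂ m₂ q, γ₁ = CAct.send a₁ m₁ q → γ₂ = CAct.send a₂ m₂ q →
        s₁ = s₂ ∧ m₁ = m₂) ∧
     (∀ a₁ a₂ m q, γ₁ = CAct.recv a₁ m q → γ₂ = CAct.recv a₂ m q → s₁ = s₂))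

end CFM

/-- acceptance of the extended MSC `(M, ξ)` by a CFM over a product alphabet -/
def AcceptsExt {P A E Ξ : Type} (C : CFM P (A × Ξ)) (M : MSC P A E) (ξ : E → Ξ) : Prop :=
  C.Accepts (M.relabel fun e => (M.lab e, ξ e))

/-- apply `μ` to an extended event, sending both `⊥` and `⊤` to `none` -/
def extToOptMap {E Θ : Type} (μ : E → Θ) : ExtEv E → Option Θ
  | .evt g => some (μ g)
  | _ => none

/-- apply `μ` to an extended event, preserving `⊥` and `⊤` -/
def extMap {E Θ : Type} (μ : E → Θ) : ExtEv E → ExtEv Θ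
  | .bot => ExtEv.bot
  | .evt g => ExtEv.evt (μ g)
  | .top => ExtEv.top

/-- formulas of the temporal logic TL -/
inductive TL (P A : Type) : Type where
  | lab (a : A) : TL P A
  | proc (p : P) : TL P A
  | disj (φ ψ : TL P A) : TL P A
  | neg (φ : TL P A) : TL P A
  | co (φ : TL P A) : TL P A
  | tuntil (φ ψ : TL P A) : TL P A
  | tsince (φ ψ : TL P A) : TL P A

/-- `M, e ⊨ φ` -/
def TLsat (M : MSC P A E) : TL P A → E → Prop
  | .lab a, e => M.lab e = a
  | .proc p, e => M.loc e = p
  | .disj φ ψ, e => TLsat M φ e ∨ TLsat M ψ e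
  | .neg φ, e => ¬ TLsat M φ e
  | .co φ, e => ∃ f, ¬ M.le e f ∧ ¬ M.le f e ∧ TLsat M φ f
  | .tuntil φ ψ, e => ∃ f, M.lt e f ∧ TLsat M ψ f ∧ ∀ g, M.lt e g → M.lt g f → TLsat M φ g
  | .tsince φ ψ, e => ∃ f, M.lt f e ∧ TLsat M ψ f ∧ ∀ g, M.lt f g → M.lt g e → TLsat M φ g

section Stmt8Aux

variable {P A E : Type}

lemma nextStar_loc (M : MSC P A E) {a b : E} (h : Relation.ReflTransGen M.next a b) :
    M.loc a = M.loc b := by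
  induction h with
  | refl => rfl
  | tail _ hstep ih => exact ih.trans (M.next_loc hstep)

lemma next_le (M : MSC P A E) {a b : E} (h : M.next a b) : M.le a b :=
  Relation.ReflTransGen.single (Or.inl h)

lemma nextStar_le (M : MSC P A E) {a b : E} (h : Relation.ReflTransGen M.next a b) :
    M.le a b := by
  induction h with
  | refl => exact Relation.ReflTransGen.refl
  | tail _ hs ih => exact Relation.ReflTransGen.tail ih (Or.inl hs)

lemma le_trans' (M : MSC P A E) {a b c : E} (h : M.le a b) (h' : M.le b c) : M.le a c :=
  Relation.ReflTransGen.trans h h'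

lemma le_nextStar (M : MSC P A E) {a b : E} (h : M.le a b) (hl : M.loc a = M.loc b) :
    Relation.ReflTransGen M.next a b := by
  rcases M.next_total a b hl with h1 | h1
  · exact h1
  · have : a = b := M.causal_antisymm h (nextStar_le M h1)
    subst this
    exact Relation.ReflTransGen.refl

lemma pathSem_loc (M : MSC P A E) :
    ∀ (π : PathExpr P A) (a b : E) (p q : P), pathSem M π a b → pcomp π p q →
      (M.loc a = p ∧ M.loc b = q) ∨ (M.loc a = M.loc b ∧ p = q) := by
  intro π
  induction π with
  | nil =>
    intro a b p q hab hpq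
    have hab' : a = b := hab
    have hpq' : p = q := hpq
    exact Or.inr ⟨by rw [hab'], hpq'⟩
  | cons l ρ ih =>
    intro a b p q hab hpq
    have hab' : ∃ c, letterSem M l a c ∧ pathSem M ρ c b := hab
    have hpq' : ∃ r, letterComp l p r ∧ pcomp ρ r q := hpq
    obtain ⟨c, hc, hcb⟩ := hab'
    obtain ⟨r, hr, hrq⟩ := hpq'
    cases l with
    | next =>
      have hr' : p = r := hr
      subst hr'
      have hlc : M.loc a = M.loc c := M.next_loc hc
      rcases ih c b p q hcb hrq with ⟨h1, h2⟩ | ⟨h1, h2⟩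
      · exact Or.inl ⟨hlc.trans h1, h2⟩
      · exact Or.inr ⟨hlc.trans h1, h2⟩
    | nextStar =>
      have hr' : p = r := hr
      subst hr'
      have hlc : M.loc a = M.loc c := nextStar_loc M hc
      rcases ih c b p q hcb hrq with ⟨h1, h2⟩ | ⟨h1, h2⟩
      · exact Or.inl ⟨hlc.trans h1, h2⟩
      · exact Or.inr ⟨hlc.trans h1, h2⟩
    | lab a0 =>
      have hr' : p = r := hr
      subst hr'
      have hc' : a = c ∧ M.lab a = a0 := hc
      have hlc : M.loc a = M.loc c := by rw [hc'.1]
      rcases ih c b p q hcb hrq with ⟨h1, h2⟩ | ⟨h1, h2⟩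
      · exact Or.inl ⟨hlc.trans h1, h2⟩
      · exact Or.inr ⟨hlc.trans h1, h2⟩
    | msg p₀ q₀ =>
      have hc' : M.loc a = p₀ ∧ M.loc c = q₀ ∧ M.msg a c := hc
      have hr' : p = p₀ ∧ r = q₀ := hr
      rcases ih c b r q hcb hrq with ⟨h1, h2⟩ | ⟨h1, h2⟩
      · exact Or.inl ⟨hc'.1.trans hr'.1.symm, h2⟩
      · exact Or.inl ⟨hc'.1.trans hr'.1.symm, by
          rw [← h1, hc'.2.1, ← hr'.2, h2]⟩

lemma loc_src (M : MSC P A E) {π : PathExpr P A} {p q : P} {a b : E}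
    (hp : pathSem M π a b) (hc : pcomp π p q) (hb : M.loc b = q) : M.loc a = p := by
  rcases pathSem_loc M π a b p q hp hc with ⟨h1, _⟩ | ⟨h1, h2⟩
  · exact h1
  · rw [h1, hb, h2]

lemma loc_tgt (M : MSC P A E) {π : PathExpr P A} {p q : P} {a b : E}
    (hp : pathSem M π a b) (hc : pcomp π p q) (ha : M.loc a = p) : M.loc b = q := by
  rcases pathSem_loc M π a b p q hp hc with ⟨_, h2⟩ | ⟨h1, h2⟩
  · exact h2
  · rw [← h1, ha, h2]

/-- FIFO monotonicity: if `y` has a `π`-path to `k`, some `z ≤ y` has a `π`-path to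
exactly `g ≥ k`, then `y` has a `π`-path to `g`. -/
lemma push (M : MSC P A E) :
    ∀ (π : PathExpr P A) (y k z g : E), pathSem M π y k → pathSem M π z g →
      Relation.ReflTransGen M.next k g → Relation.ReflTransGen M.next z y →
      pathSem M π y g := by
  intro π
  induction π with
  | nil =>
    intro y k z g hyk hzg hkg hzy
    have hyk' : y = k := hyk
    have hzg' : z = g := hzg
    subst hyk'; subst hzg'
    exact M.causal_antisymm (nextStar_le M hkg) (nextStar_le M hzy)
  | cons l ρ ih =>
    intro y k z g hyk hzg hkg hzy
    have hyk' : ∃ c, letterSem M l y c ∧ pathSem M ρ c k := hyk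
    have hzg' : ∃ c, letterSem M l z c ∧ pathSem M ρ c g := hzg
    obtain ⟨y₁, hy1, hyk2⟩ := hyk'
    obtain ⟨z₁, hz1, hzg2⟩ := hzg'
    cases l with
    | next =>
      have hy1' : M.next y y₁ := hy1
      have hz1' : M.next z z₁ := hz1
      rcases Relation.ReflTransGen.cases_head hzy with heq | ⟨w, hzw, hwy⟩
      · subst heq
        have hze : z₁ = y₁ := M.next_right_unique hz1' hy1'
        subst hze
        exact ⟨z₁, hy1, hzg2⟩
      · have hwz1 : w = z₁ := M.next_right_unique hzw hz1'
        subst hwz1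
        have hz1y1 : Relation.ReflTransGen M.next w y₁ := hwy.tail hy1'
        exact ⟨y₁, hy1, ih y₁ k w g hyk2 hzg2 hkg hz1y1⟩
    | nextStar =>
      have hy1' : Relation.ReflTransGen M.next y y₁ := hy1
      have hz1' : Relation.ReflTransGen M.next z z₁ := hz1
      have hloc : M.loc z₁ = M.loc y :=
        (nextStar_loc M hz1').symm.trans (nextStar_loc M hzy)
      rcases M.next_total z₁ y hloc with hz1y | hyz1
      · exact ⟨y₁, hy1, ih y₁ k z₁ g hyk2 hzg2 hkg (hz1y.trans hy1')⟩
      · exact ⟨z₁, (hyz1 : M.nextStar y z₁), hzg2⟩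
    | lab a0 =>
      have hy1' : y = y₁ ∧ M.lab y = a0 := hy1
      have hz1' : z = z₁ ∧ M.lab z = a0 := hz1
      obtain ⟨rfl, hla⟩ := hy1'
      obtain ⟨rfl, _⟩ := hz1'
      exact ⟨y, ⟨rfl, hla⟩, ih y k z g hyk2 hzg2 hkg hzy⟩
    | msg p₀ q₀ =>
      have hy1' : M.loc y = p₀ ∧ M.loc y₁ = q₀ ∧ M.msg y y₁ := hy1
      have hz1' : M.loc z = p₀ ∧ M.loc z₁ = q₀ ∧ M.msg z z₁ := hz1
      obtain ⟨hyp, hy1q, hmy⟩ := hy1'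
      obtain ⟨hzp, hz1q, hmz⟩ := hz1'
      have hmono : Relation.ReflTransGen M.next z₁ y₁ :=
        (M.fifo hmz hmy (hzp.trans hyp.symm) (hz1q.trans hy1q.symm)).mp hzy
      exact ⟨y₁, ⟨hyp, hy1q, hmy⟩, ih y₁ k z₁ g hyk2 hzg2 hkg hmono⟩

lemma isLast_fun (M : MSC P A E) (π : PathExpr P A) (e : E) :
    ∀ {x y : ExtEv E}, IsLast M π e x → IsLast M π e y → x = y := by
  intro x y hx hy
  cases x with
  | top => exact (hx : False).elim
  | bot =>
    cases y with
    | top => exact (hy : False).elim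
    | bot => rfl
    | evt g =>
      have hy' : pathSem M π g e ∧ ∀ f, pathSem M π f e → M.le f g := hy
      exact absurd hy'.1 ((hx : ∀ f, ¬ pathSem M π f e) g)
  | evt g =>
    cases y with
    | top => exact (hy : False).elim
    | bot =>
      have hx' : pathSem M π g e ∧ ∀ f, pathSem M π f e → M.le f g := hx
      exact absurd hx'.1 ((hy : ∀ f, ¬ pathSem M π f e) g)
    | evt g' =>
      have hx' : pathSem M π g e ∧ ∀ f, pathSem M π f e → M.le f g := hx
      have hy' : pathSem M π g' e ∧ ∀ f, pathSem M π f e → M.le f g' := hy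
      have : g = g' := M.causal_antisymm (hy'.2 g hx'.1) (hx'.2 g' hy'.1)
      rw [this]

lemma pathSem_append (M : MSC P A E) :
    ∀ (σ τ : PathExpr P A) (a c : E),
      pathSem M (σ ++ τ) a c ↔ ∃ b, pathSem M σ a b ∧ pathSem M τ b c := by
  intro σ
  induction σ with
  | nil =>
    intro τ a c
    constructor
    · intro h; exact ⟨a, rfl, h⟩
    · rintro ⟨b, hb, h⟩
      have hb' : a = b := hb
      subst hb'; exact h
  | cons l ρ ih =>
    intro τ a c
    constructor
    · intro h
      have h' : ∃ d, letterSem M l a d ∧ pathSem M (ρ ++ τ) d c := h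
      obtain ⟨d, hd, hdc⟩ := h'
      obtain ⟨b, h1, h2⟩ := (ih τ d c).mp hdc
      exact ⟨b, ⟨d, hd, h1⟩, h2⟩
    · rintro ⟨b, hb, h2⟩
      have hb' : ∃ d, letterSem M l a d ∧ pathSem M ρ d b := hb
      obtain ⟨d, hd, h1⟩ := hb'
      exact ⟨d, hd, (ih τ d c).mpr ⟨b, h1, h2⟩⟩

lemma pathSem_star (M : MSC P A E) (b c : E) :
    pathSem M [PathLetter.nextStar] b c ↔ Relation.ReflTransGen M.next b c := by
  constructor
  · intro h
    have h' : ∃ d, M.nextStar b d ∧ pathSem M [] d c := h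
    obtain ⟨d, hd, hdc⟩ := h'
    have : d = c := hdc
    subst this; exact hd
  · intro h; exact ⟨c, h, rfl⟩

end Stmt8Aux

end Gossip
open Gossip in
/-- Lemma 3.3: if `e → f` and `π→* ≼_e π'→*`, then
`π' ≺_f π` iff (`last_{π'}(f) = ⊥` and `last_π(f) ≠ ⊥`) or `f_{π', →+π}(f) = f`. -/
theorem stmt8 {P A E : Type} [Fintype P] [Fintype A] (M : MSC P A E)
    (p q : P) (π π' : PathExpr P A)
    (hπ : pcomp π p q) (hπ' : pcomp π' p q)
    (e f : E) (he : M.loc e = q) (hf : M.loc f = q) (hef : M.next e f)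
    (u v : ExtEv E)
    (hu : IsLast M (π ++ [PathLetter.nextStar]) e u)
    (hv : IsLast M (π' ++ [PathLetter.nextStar]) e v)
    (huv : M.extLe u v)
    (x x' z : ExtEv E)
    (hx : IsLast M π f x) (hx' : IsLast M π' f x')
    (hz : IsFa M π' (PathLetter.next :: PathLetter.nextStar :: π) f z) :
    M.extLt x' x ↔ ((x' = ExtEv.bot ∧ x ≠ ExtEv.bot) ∨ z = ExtEv.evt f) := by
  classical
  cases x with
  | top => exact (hx : False).elim
  | bot =>
    have hx0 : ∀ h, ¬ pathSem M π h f := hx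
    cases x' with
    | top => exact (hx' : False).elim
    | bot =>
      -- no `π`-path and no `π'`-path into f : both sides false
      have hx'0 : ∀ h, ¬ pathSem M π' h f := hx'
      constructor
      · intro h; exact absurd rfl h.2
      · rintro (⟨_, hne⟩ | hzf)
        · exact absurd rfl hne
        · rcases hz with ⟨_, hzb⟩ | ⟨g'', hlast, _⟩
          · rw [hzb] at hzf; cases hzf
          · have hlast' : pathSem M π' g'' f ∧ _ := hlast
            exact absurd hlast'.1 (hx'0 g'')
    | evt g' =>
      -- `π'`-path exists, no `π`-path : both sides false
      have hx'0 : pathSem M π' g' f ∧ ∀ h, pathSem M π' h f → M.le h g' := hx'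
      constructor
      · intro h; exact (h.1 : False).elim
      · rintro (⟨hb, _⟩ | hzf)
        · cases hb
        · rcases hz with ⟨hlb, hzb⟩ | ⟨g'', hlast, hfirst⟩
          · exact absurd hx'0.1 ((hlb : ∀ h, ¬ pathSem M π' h f) g')
          · rw [hzf] at hfirst
            have hfirst' : pathSem M (PathLetter.next :: PathLetter.nextStar :: π) g'' f
                ∧ _ := hfirst
            have hp : ∃ c, M.next g'' c ∧ ∃ d, M.nextStar c d ∧ pathSem M π d f :=
              hfirst'.1
            obtain ⟨c, _, d, _, hpf⟩ := hp
            exact absurd hpf (hx0 d)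
  | evt g =>
    have hxg : pathSem M π g f ∧ ∀ h, pathSem M π h f → M.le h g := hx
    cases x' with
    | top => exact (hx' : False).elim
    | bot =>
      -- `π`-path exists, no `π'`-path : both sides true
      constructor
      · intro _; exact Or.inl ⟨rfl, fun h => by cases h⟩
      · intro _; exact ⟨trivial, fun h => by cases h⟩
    | evt g' =>
      -- the interesting case: both lasts exist
      have hx'g : pathSem M π' g' f ∧ ∀ h, pathSem M π' h f → M.le h g' := hx'
      -- get the IsFirst component of hz
      rcases hz with ⟨hlb, _⟩ | ⟨g'', hlast'', hfirst⟩
      · exact absurd hx'g.1 ((hlb : ∀ h, ¬ pathSem M π' h f) g')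
      have hgg : g'' = g' := by
        have := isLast_fun M π' f hlast'' hx'
        exact ExtEv.evt.injEq _ _ ▸ this
      subst hgg
      -- locations
      have hlocg : M.loc g = p := loc_src M hxg.1 hπ hf
      have hlocg' : M.loc g'' = p := loc_src M hx'g.1 hπ' hf
      constructor
      · -- forward direction
        intro hlt
        have hle : M.le g'' g := hlt.1
        have hne : g'' ≠ g := fun h => hlt.2 (by rw [h])
        have hss : Relation.ReflTransGen M.next g'' g :=
          le_nextStar M hle (hlocg'.trans hlocg.symm)
        rcases Relation.ReflTransGen.cases_head hss with heq | ⟨h1, hstep, h1g⟩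
        · exact absurd heq hne
        -- a (→ →* π)-path from g'' to f
        have hpathf : pathSem M (PathLetter.next :: PathLetter.nextStar :: π) g'' f :=
          ⟨h1, hstep, g, h1g, hxg.1⟩
        cases z with
        | bot => exact (hfirst : False).elim
        | top =>
          exact absurd hpathf
            ((hfirst : ∀ w, ¬ pathSem M (PathLetter.next :: PathLetter.nextStar :: π)
              g'' w) f)
        | evt z₀ =>
          have hfirst' : pathSem M (PathLetter.next :: PathLetter.nextStar :: π) g'' z₀
              ∧ ∀ w, pathSem M (PathLetter.next :: PathLetter.nextStar :: π) g'' w →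
              M.le z₀ w := hfirst
          have hz0f : M.le z₀ f := hfirst'.2 f hpathf
          -- z₀ is on process q
          obtain ⟨c, hc, d, hd, hpz⟩ :
              ∃ c, M.next g'' c ∧ ∃ d, M.nextStar c d ∧ pathSem M π d z₀ := hfirst'.1
          have hlocd : M.loc d = p := by
            rw [← nextStar_loc M hd, ← M.next_loc hc, hlocg']
          have hlocz₀ : M.loc z₀ = q := loc_tgt M hpz hπ hlocd
          have hz0sf : Relation.ReflTransGen M.next z₀ f :=
            le_nextStar M hz0f (hlocz₀.trans hf.symm)
          right
          by_cases hzf : z₀ = f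
          · rw [hzf]
          · exfalso
            -- then z₀ →* e, yielding a (π →*)-path from d into e
            have hz0e : Relation.ReflTransGen M.next z₀ e := by
              rcases Relation.ReflTransGen.cases_tail hz0sf with heq | ⟨w, hzw, hwf⟩
              · exact absurd heq.symm hzf
              · have : w = e := M.next_left_unique hwf hef
                rw [← this]; exact hzw
            have hpde : pathSem M (π ++ [PathLetter.nextStar]) d e :=
              (pathSem_append M π [PathLetter.nextStar] d e).mpr
                ⟨z₀, hpz, (pathSem_star M z₀ e).mpr hz0e⟩
            -- so d ≤ u₀ ≤ v₀ ≤ g'' , while g'' < d : contradiction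
            cases u with
            | top => exact (hu : False).elim
            | bot => exact (hu : ∀ h, ¬ pathSem M (π ++ [PathLetter.nextStar]) h e) d hpde
            | evt u₀ =>
              have hu' : pathSem M (π ++ [PathLetter.nextStar]) u₀ e ∧
                  ∀ h, pathSem M (π ++ [PathLetter.nextStar]) h e → M.le h u₀ := hu
              have hdu : M.le d u₀ := hu'.2 d hpde
              cases v with
              | bot => exact (huv : False).elim
              | top => exact (hv : False).elim
              | evt v₀ =>
                have huv' : M.le u₀ v₀ := huv
                have hv' : pathSem M (π' ++ [PathLetter.nextStar]) v₀ e ∧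
                    ∀ h, pathSem M (π' ++ [PathLetter.nextStar]) h e → M.le h v₀ := hv
                obtain ⟨k, hpk, hke'⟩ :=
                  (pathSem_append M π' [PathLetter.nextStar] v₀ e).mp hv'.1
                have hke : Relation.ReflTransGen M.next k e :=
                  (pathSem_star M k e).mp hke'
                have hkf : Relation.ReflTransGen M.next k f := hke.tail hef
                have hlock : M.loc k = q := by rw [nextStar_loc M hke, he]
                have hlocv₀ : M.loc v₀ = p := loc_src M hpk hπ' hlock
                -- v₀ ≤ g''
                have hvg : M.le v₀ g'' := by
                  rcases M.next_total v₀ g'' (hlocv₀.trans hlocg'.symm) with h1 | h1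
                  · exact nextStar_le M h1
                  · exact hx'g.2 v₀ (push M π' v₀ k g'' f hpk hx'g.1 hkf h1)
                -- chain g'' < c ≤ d ≤ u₀ ≤ v₀ ≤ g''
                have hcg : M.le c g'' :=
                  le_trans' M (nextStar_le M hd)
                    (le_trans' M hdu (le_trans' M huv' hvg))
                have : g'' = c := M.causal_antisymm (next_le M hc) hcg
                exact M.next_irrefl g'' (by rw [this] at hc ⊢; exact hc)
      · -- backward direction
        rintro (⟨hb, _⟩ | hzf)
        · cases hb
        · rw [hzf] at hfirst
          have hfirst' : pathSem M (PathLetter.next :: PathLetter.nextStar :: π) g'' f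
              ∧ _ := hfirst
          obtain ⟨c, hc, d, hd, hpf⟩ :
              ∃ c, M.next g'' c ∧ ∃ d, M.nextStar c d ∧ pathSem M π d f := hfirst'.1
          have hdg : M.le d g := hxg.2 d hpf
          have hle : M.le g'' g :=
            le_trans' M (next_le M hc) (le_trans' M (nextStar_le M hd) hdg)
          have hne : g'' ≠ g := by
            intro heq
            have hcg : M.le c g'' := by
              rw [heq]; exact le_trans' M (nextStar_le M hd) hdg
            have : g'' = c := M.causal_antisymm (next_le M hc) hcg
            exact M.next_irrefl g'' (by rw [this] at hc ⊢; exact hc)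
          exact ⟨hle, fun h => hne (by injection h)⟩
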